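/- Block encoding of the two-dimensional discrete divergence: on ℂ² ⊗ ℂ² ⊗ ℂ^{N²} (qubits ordered ℓ, k, then the system register indexed by Fin N × Fin N with components (j⁽¹⁾, j⁽⁰⁾)) define C₀ = P₀ ⊗ P₀ ⊗ (I_N ⊗ S₋) + (I₄ − P₀ ⊗ P₀) ⊗ I_{N²}, C₁ = P₁ ⊗ P₀ ⊗ (I_N ⊗ S₊) + (I₄ − P₁ ⊗ P₀) ⊗ I_{N²}, C₂ = P₀ ⊗ P₁ ⊗ (S₋ ⊗ I_N) + (I₄ − P₀ ⊗ P₁) ⊗ I_{N²}, C₃ = P₁ ⊗ P₁ ⊗ (S₊ ⊗ I_N) + (I₄ − P₁ ⊗ P₁) ⊗ I_{N²}, and U = (I₂ ⊗ H ⊗ I_{N²}) · (H ⊗ I₂ ⊗ I_{N²}) · C₃ · C₂ · C₁ · C₀ · ((Z·H) ⊗ I₂ ⊗ I_{N²}). Then U block-encodes the discrete divergence with sub-normalization factor 1/√2: for each a ∈ Fin 2 and all r, c ∈ Fin N × Fin N, U((0,0,r),(0,a,c)) = (1/√2)·(D̃⁽ᵃ⁾)_{rc}, where D̃⁽⁰⁾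 = I_N ⊗ D̃₁, D̃⁽¹⁾ = D̃₁ ⊗ I_N, and D̃₁ = (1/2)(S₋ − S₊). -/
import Mathlib


open Matrix Kronecker

noncomputable section

/-- Cyclic shift matrix `S₊`: `(S₊)_{jk} = 1` iff `j ≡ k+1 (mod N)`. -/
def Sp (N : ℕ) [NeZero N] : Matrix (Fin N) (Fin N) ℂ :=
  Matrix.of fun j k => if j = k + 1 then 1 else 0

/-- Cyclic shift matrix `S₋ = S₊ᵀ`. -/
def Sm (N : ℕ) [NeZero N] : Matrix (Fin N) (Fin N) ℂ := (Sp N)ᵀ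

def P0 : Matrix (Fin 2) (Fin 2) ℂ := !![1, 0; 0, 0]
def P1 : Matrix (Fin 2) (Fin 2) ℂ := !![0, 0; 0, 1]
def Hg : Matrix (Fin 2) (Fin 2) ℂ := ((Real.sqrt 2 : ℝ) : ℂ)⁻¹ • !![1, 1; 1, -1]
def Zg : Matrix (Fin 2) (Fin 2) ℂ := !![1, 0; 0, -1]

/-- `D̃₁ = (1/2)(S₋ − S₊)`, the scaled central finite-difference approximation of `d/dx`. -/
def Dt1 (N : ℕ) [NeZero N] : Matrix (Fin N) (Fin N) ℂ :=
  (1 / 2 : ℂ) • (Sm N - Sp N)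

section helpers
variable {α β : Type*} [Fintype α] [DecidableEq α] [Fintype β] [DecidableEq β]

lemma sub_kron (A B : Matrix α α ℂ) (C : Matrix β β ℂ) :
    (A - B) ⊗ₖ C = A ⊗ₖ C - B ⊗ₖ C := by
  ext ⟨i,j⟩ ⟨k,l⟩
  simp [Matrix.kroneckerMap_apply, sub_mul]

lemma stepG (Q R : Matrix α α ℂ) (S : Matrix β β ℂ) (Y : Matrix (α × β) (α × β) ℂ)
    (h1 : (Q ⊗ₖ (1 : Matrix β β ℂ)) * Y = 0) (h2 : Q * R = 0) :
    (Q ⊗ₖ S + (1 - Q) ⊗ₖ (1 : Matrix β β ℂ)) * (Y + (1 - R) ⊗ₖ (1 : Matrix β β ℂ))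
      = (Q ⊗ₖ S + Y) + (1 - (Q + R)) ⊗ₖ (1 : Matrix β β ℂ) := by
  have hQS : (Q ⊗ₖ S) * Y = 0 := by
    have h : Q ⊗ₖ S = ((1 : Matrix α α ℂ) ⊗ₖ S) * (Q ⊗ₖ (1 : Matrix β β ℂ)) := by
      rw [← Matrix.mul_kronecker_mul, one_mul, mul_one]
    rw [h, mul_assoc, h1, mul_zero]
  have e2 : (Q ⊗ₖ S) * ((1 - R) ⊗ₖ (1 : Matrix β β ℂ)) = Q ⊗ₖ S := by
    rw [← Matrix.mul_kronecker_mul, mul_sub, mul_one, h2, sub_zero, mul_one]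
  have e3 : ((1 - Q) ⊗ₖ (1 : Matrix β β ℂ)) * Y = Y := by
    rw [sub_kron, Matrix.one_kronecker_one, sub_mul, one_mul, h1, sub_zero]
  have e4 : ((1 - Q) ⊗ₖ (1 : Matrix β β ℂ)) * ((1 - R) ⊗ₖ (1 : Matrix β β ℂ))
      = (1 - (Q + R)) ⊗ₖ (1 : Matrix β β ℂ) := by
    rw [← Matrix.mul_kronecker_mul, mul_one]
    rw [sub_mul, one_mul, mul_sub, mul_one, h2, sub_zero]
    rw [show (1:Matrix α α ℂ) - R - Q = 1 - (Q+R) by abel]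
  rw [add_mul, mul_add, mul_add, hQS, zero_add, e2, e3, e4, add_assoc]
end helpers

-- two-by-two facts
lemma hP00 : P0 * P0 = P0 := by
  ext i j; fin_cases i <;> fin_cases j <;>
    simp [P0, Matrix.mul_apply, Fin.sum_univ_two]
lemma hP11 : P1 * P1 = P1 := by
  ext i j; fin_cases i <;> fin_cases j <;>
    simp [P1, Matrix.mul_apply, Fin.sum_univ_two]
lemma hP01 : P0 * P1 = 0 := by
  ext i j; fin_cases i <;> fin_cases j <;>
    simp [P0, P1, Matrix.mul_apply, Fin.sum_univ_two]
lemma hP10 : P1 * P0 = 0 := by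
  ext i j; fin_cases i <;> fin_cases j <;>
    simp [P0, P1, Matrix.mul_apply, Fin.sum_univ_two]
lemma hPsum : P0 + P1 = (1 : Matrix (Fin 2) (Fin 2) ℂ) := by
  ext i j; fin_cases i <;> fin_cases j <;>
    simp [P0, P1, Matrix.one_apply]

theorem stmt_15 (n : ℕ) (hn : 1 ≤ n) (N : ℕ) (hN : N = 2 ^ n) [NeZero N]
    (C0 C1 C2 C3 U : Matrix ((Fin 2 × Fin 2) × (Fin N × Fin N)) ((Fin 2 × Fin 2) × (Fin N × Fin N)) ℂ)
    (hC0 : C0 = P0 ⊗ₖ P0 ⊗ₖ ((1 : Matrix (Fin N) (Fin N) ℂ) ⊗ₖ Sm N)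
      + ((1 : Matrix (Fin 2 × Fin 2) (Fin 2 × Fin 2) ℂ) - P0 ⊗ₖ P0)
          ⊗ₖ (1 : Matrix (Fin N × Fin N) (Fin N × Fin N) ℂ))
    (hC1 : C1 = P1 ⊗ₖ P0 ⊗ₖ ((1 : Matrix (Fin N) (Fin N) ℂ) ⊗ₖ Sp N)
      + ((1 : Matrix (Fin 2 × Fin 2) (Fin 2 × Fin 2) ℂ) - P1 ⊗ₖ P0)
          ⊗ₖ (1 : Matrix (Fin N × Fin N) (Fin N × Fin N) ℂ))
    (hC2 : C2 = P0 ⊗ₖ P1 ⊗ₖ (Sm N ⊗ₖ (1 : Matrix (Fin N) (Fin N) ℂ))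
      + ((1 : Matrix (Fin 2 × Fin 2) (Fin 2 × Fin 2) ℂ) - P0 ⊗ₖ P1)
          ⊗ₖ (1 : Matrix (Fin N × Fin N) (Fin N × Fin N) ℂ))
    (hC3 : C3 = P1 ⊗ₖ P1 ⊗ₖ (Sp N ⊗ₖ (1 : Matrix (Fin N) (Fin N) ℂ))
      + ((1 : Matrix (Fin 2 × Fin 2) (Fin 2 × Fin 2) ℂ) - P1 ⊗ₖ P1)
          ⊗ₖ (1 : Matrix (Fin N × Fin N) (Fin N × Fin N) ℂ))
    (hU : U = ((1 : Matrix (Fin 2) (Fin 2) ℂ) ⊗ₖ Hg ⊗ₖ (1 : Matrix (Fin N × Fin N) (Fin N × Fin N) ℂ))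
      * (Hg ⊗ₖ (1 : Matrix (Fin 2) (Fin 2) ℂ) ⊗ₖ (1 : Matrix (Fin N × Fin N) (Fin N × Fin N) ℂ))
      * C3 * C2 * C1 * C0
      * ((Zg * Hg) ⊗ₖ (1 : Matrix (Fin 2) (Fin 2) ℂ) ⊗ₖ (1 : Matrix (Fin N × Fin N) (Fin N × Fin N) ℂ))) :
    ∀ r c : Fin N × Fin N,
      U ((0, 0), r) ((0, 0), c)
        = ((Real.sqrt 2 : ℝ) : ℂ)⁻¹ * ((1 : Matrix (Fin N) (Fin N) ℂ) ⊗ₖ Dt1 N) r c ∧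
      U ((0, 0), r) ((0, 1), c)
        = ((Real.sqrt 2 : ℝ) : ℂ)⁻¹ * (Dt1 N ⊗ₖ (1 : Matrix (Fin N) (Fin N) ℂ)) r c := by
  -- abbreviations
  set Q0 : Matrix (Fin 2 × Fin 2) (Fin 2 × Fin 2) ℂ := P0 ⊗ₖ P0 with hQ0
  set Q1 : Matrix (Fin 2 × Fin 2) (Fin 2 × Fin 2) ℂ := P1 ⊗ₖ P0 with hQ1
  set Q2 : Matrix (Fin 2 × Fin 2) (Fin 2 × Fin 2) ℂ := P0 ⊗ₖ P1 with hQ2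
  set Q3 : Matrix (Fin 2 × Fin 2) (Fin 2 × Fin 2) ℂ := P1 ⊗ₖ P1 with hQ3
  set S0 : Matrix (Fin N × Fin N) (Fin N × Fin N) ℂ := (1 : Matrix (Fin N) (Fin N) ℂ) ⊗ₖ Sm N with hS0
  set S1 : Matrix (Fin N × Fin N) (Fin N × Fin N) ℂ := (1 : Matrix (Fin N) (Fin N) ℂ) ⊗ₖ Sp N with hS1
  set S2 : Matrix (Fin N × Fin N) (Fin N × Fin N) ℂ := Sm N ⊗ₖ (1 : Matrix (Fin N) (Fin N) ℂ) with hS2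
  set S3 : Matrix (Fin N × Fin N) (Fin N × Fin N) ℂ := Sp N ⊗ₖ (1 : Matrix (Fin N) (Fin N) ℂ) with hS3
  have q10 : Q1 * Q0 = 0 := by
    rw [hQ1, hQ0, ← Matrix.mul_kronecker_mul, hP10, hP00, Matrix.zero_kronecker]
  have q21 : Q2 * Q1 = 0 := by
    rw [hQ2, hQ1, ← Matrix.mul_kronecker_mul, hP01, Matrix.zero_kronecker]
  have q20 : Q2 * Q0 = 0 := by
    rw [hQ2, hQ0, ← Matrix.mul_kronecker_mul, hP10, Matrix.kronecker_zero]
  have q32 : Q3 * Q2 = 0 := by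
    rw [hQ3, hQ2, ← Matrix.mul_kronecker_mul, hP10, Matrix.zero_kronecker]
  have q31 : Q3 * Q1 = 0 := by
    rw [hQ3, hQ1, ← Matrix.mul_kronecker_mul, hP10, Matrix.kronecker_zero]
  have q30 : Q3 * Q0 = 0 := by
    rw [hQ3, hQ0, ← Matrix.mul_kronecker_mul, hP10, Matrix.zero_kronecker]
  -- the product of the controlled shifts
  have h10 : C1 * C0 = (Q1 ⊗ₖ S1 + Q0 ⊗ₖ S0)
      + (1 - (Q1 + Q0)) ⊗ₖ (1 : Matrix (Fin N × Fin N) (Fin N × Fin N) ℂ) := by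
    rw [hC1, hC0]
    exact stepG _ _ _ _
      (by simp [hQ0, hQ1, ← Matrix.mul_kronecker_mul, hP10]) q10
  have h210 : C2 * (C1 * C0) = (Q2 ⊗ₖ S2 + (Q1 ⊗ₖ S1 + Q0 ⊗ₖ S0))
      + (1 - (Q2 + (Q1 + Q0))) ⊗ₖ (1 : Matrix (Fin N × Fin N) (Fin N × Fin N) ℂ) := by
    rw [h10, hC2]
    refine stepG _ _ _ _ ?_ (by rw [mul_add, q21, q20, add_zero])
    simp [hQ0, hQ1, hQ2, mul_add, ← Matrix.mul_kronecker_mul, hP10, hP01]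
  have h3210 : C3 * (C2 * (C1 * C0)) = Q3 ⊗ₖ S3 + (Q2 ⊗ₖ S2 + (Q1 ⊗ₖ S1 + Q0 ⊗ₖ S0)) := by
    rw [h210, hC3]
    have hstep := stepG Q3 (Q2 + (Q1 + Q0)) S3
      (Q2 ⊗ₖ S2 + (Q1 ⊗ₖ S1 + Q0 ⊗ₖ S0))
      (by simp [hQ0, hQ1, hQ2, hQ3, mul_add, ← Matrix.mul_kronecker_mul, hP10, hP01])
      (by rw [mul_add, mul_add, q32, q31, q30, add_zero, add_zero])
    rw [hstep]
    have hsum : Q3 + (Q2 + (Q1 + Q0)) = 1 := by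
      rw [hQ0, hQ1, hQ2, hQ3,
        show P1 ⊗ₖ P1 + (P0 ⊗ₖ P1 + (P1 ⊗ₖ P0 + P0 ⊗ₖ P0))
          = (P0 + P1) ⊗ₖ (P0 + P1) by
            rw [Matrix.add_kronecker, Matrix.kronecker_add, Matrix.kronecker_add]; abel,
        hPsum, Matrix.one_kronecker_one]
    rw [hsum, sub_self, Matrix.zero_kronecker, add_zero]
  -- rewrite U
  have hU2 : U = (((Hg * (P1 * (Zg * Hg))) ⊗ₖ (Hg * P1)) ⊗ₖ S3
      + (((Hg * (P0 * (Zg * Hg))) ⊗ₖ (Hg * P1)) ⊗ₖ S2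
      + (((Hg * (P1 * (Zg * Hg))) ⊗ₖ (Hg * P0)) ⊗ₖ S1
      + ((Hg * (P0 * (Zg * Hg))) ⊗ₖ (Hg * P0)) ⊗ₖ S0))) := by
    have hre : U = ((1 : Matrix (Fin 2) (Fin 2) ℂ) ⊗ₖ Hg ⊗ₖ (1 : Matrix (Fin N × Fin N) (Fin N × Fin N) ℂ))
      * ((Hg ⊗ₖ (1 : Matrix (Fin 2) (Fin 2) ℂ) ⊗ₖ (1 : Matrix (Fin N × Fin N) (Fin N × Fin N) ℂ))
      * ((C3 * (C2 * (C1 * C0)))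
      * ((Zg * Hg) ⊗ₖ (1 : Matrix (Fin 2) (Fin 2) ℂ) ⊗ₖ (1 : Matrix (Fin N × Fin N) (Fin N × Fin N) ℂ)))) := by
      rw [hU]; simp only [mul_assoc]
    rw [hre, h3210, hQ0, hQ1, hQ2, hQ3]
    simp only [Matrix.add_mul, Matrix.mul_add, ← Matrix.mul_kronecker_mul, Matrix.mul_one,
      Matrix.one_mul, mul_one, one_mul, add_mul, mul_add]
  -- scalar facts
  have hs2 : ((Real.sqrt 2 : ℝ) : ℂ)⁻¹ * ((Real.sqrt 2 : ℝ) : ℂ)⁻¹ = (2 : ℂ)⁻¹ := by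
    rw [← mul_inv, ← Complex.ofReal_mul, Real.mul_self_sqrt (by norm_num)]
    norm_num
  intro r c
  constructor
  · rw [hU2]
    simp only [Matrix.add_apply, Matrix.kroneckerMap_apply, hS0, hS1, hS2, hS3]
    simp [Hg, P0, P1, Zg, Matrix.mul_apply, Fin.sum_univ_two, Matrix.one_apply, Dt1,
      Matrix.smul_apply, Matrix.sub_apply]
    split_ifs with h
    · linear_combination (((Real.sqrt 2 : ℝ) : ℂ)⁻¹ * (Sm N r.2 c.2 - Sp N r.2 c.2)) * hs2
    · ring
  · rw [hU2]
    simp only [Matrix.add_apply, Matrix.kroneckerMap_apply, hS0, hS1, hS2, hS3]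
    simp [Hg, P0, P1, Zg, Matrix.mul_apply, Fin.sum_univ_two, Matrix.one_apply, Dt1,
      Matrix.smul_apply, Matrix.sub_apply]
    split_ifs with h
    · linear_combination (((Real.sqrt 2 : ℝ) : ℂ)⁻¹ * (Sm N r.1 c.1 - Sp N r.1 c.1)) * hs2
    · ring
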